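/- In the effect-free fragment of call-by-push-value (no recursion, no nondeterminism), big-step evaluation is deterministic and total on closed well-typed computations: for every closed computation M : C there exists exactly one terminal computation R with M ⇓ R. -/

import Mathlib

/-! The effect-free fragment of call-by-push-value (booleans, thunks,
functions, returners; no recursion, no nondeterminism), with intrinsically
typed syntax, capture-avoiding substitution, and big-step evaluation. -/

mutual
/-- CBPV value types. -/
inductive VTy : Type
  | bool : VTy
  | thunk : CTy → VTy
/-- CBPV computation types. -/
inductive CTy : Type
  | arr : VTy → CTy → CTy
  | free : VTy → CTy
end

/-- Typed de Bruijn variables. -/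
inductive CVar : List VTy → VTy → Type
  | vz {Γ A} : CVar (A :: Γ) A
  | vs {Γ A B} : CVar Γ A → CVar (B :: Γ) A

mutual
/-- Well-typed CBPV values in context. -/
inductive Val : List VTy → VTy → Type
  | var {Γ A} : CVar Γ A → Val Γ A
  | tt {Γ} : Val Γ VTy.bool
  | ff {Γ} : Val Γ VTy.bool
  | thunk {Γ C} : Comp Γ C → Val Γ (VTy.thunk C)
/-- Well-typed CBPV computations in context. -/
inductive Comp : List VTy → CTy → Type
  | lam {Γ A C} : Comp (A :: Γ) C → Comp Γ (CTy.arr A C)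
  | app {Γ A C} : Val Γ A → Comp Γ (CTy.arr A C) → Comp Γ C
  | ret {Γ A} : Val Γ A → Comp Γ (CTy.free A)
  | toIn {Γ A C} : Comp Γ (CTy.free A) → Comp (A :: Γ) C → Comp Γ C
  | ite {Γ C} : Val Γ VTy.bool → Comp Γ C → Comp Γ C → Comp Γ C
  | force {Γ C} : Val Γ (VTy.thunk C) → Comp Γ C
end

/-- Renamings between contexts. -/
def Ren (Γ Δ : List VTy) : Type := ∀ A, CVar Γ A → CVar Δ A

/-- Lift a renaming under a binder. -/
def liftRen {Γ Δ : List VTy} {A : VTy} (r : Ren Γ Δ) : Ren (A :: Γ) (A :: Δ) :=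
  fun _ x =>
    match x with
    | CVar.vz => CVar.vz
    | CVar.vs y => CVar.vs (r _ y)

mutual
/-- Renaming on values. -/
def renVal : {Γ Δ : List VTy} → {A : VTy} → Ren Γ Δ → Val Γ A → Val Δ A
  | _, _, _, r, Val.var x => Val.var (r _ x)
  | _, _, _, _, Val.tt => Val.tt
  | _, _, _, _, Val.ff => Val.ff
  | _, _, _, r, Val.thunk M => Val.thunk (renComp r M)
/-- Renaming on computations. -/
def renComp : {Γ Δ : List VTy} → {C : CTy} → Ren Γ Δ → Comp Γ C → Comp Δ C
  | _, _, _, r, Comp.lam M => Comp.lam (renComp (liftRen r) M)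
  | _, _, _, r, Comp.app V M => Comp.app (renVal r V) (renComp r M)
  | _, _, _, r, Comp.ret V => Comp.ret (renVal r V)
  | _, _, _, r, Comp.toIn M N => Comp.toIn (renComp r M) (renComp (liftRen r) N)
  | _, _, _, r, Comp.ite V M N =>
      Comp.ite (renVal r V) (renComp r M) (renComp r N)
  | _, _, _, r, Comp.force V => Comp.force (renVal r V)
end

/-- Substitutions: variables to values. -/
def CSub (Γ Δ : List VTy) : Type := ∀ A, CVar Γ A → Val Δ A

/-- Lift a substitution under a binder. -/
def liftSub {Γ Δ : List VTy} {A : VTy} (s : CSub Γ Δ) : CSub (A :: Γ) (A :: Δ) :=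
  fun _ x =>
    match x with
    | CVar.vz => Val.var CVar.vz
    | CVar.vs y => renVal (fun _ => CVar.vs) (s _ y)

mutual
/-- Substitution on values. -/
def substVal : {Γ Δ : List VTy} → {A : VTy} → CSub Γ Δ → Val Γ A → Val Δ A
  | _, _, _, s, Val.var x => s _ x
  | _, _, _, _, Val.tt => Val.tt
  | _, _, _, _, Val.ff => Val.ff
  | _, _, _, s, Val.thunk M => Val.thunk (substComp s M)
/-- Substitution on computations. -/
def substComp : {Γ Δ : List VTy} → {C : CTy} → CSub Γ Δ → Comp Γ C → Comp Δ C
  | _, _, _, s, Comp.lam M => Comp.lam (substComp (liftSub s) M)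
  | _, _, _, s, Comp.app V M => Comp.app (substVal s V) (substComp s M)
  | _, _, _, s, Comp.ret V => Comp.ret (substVal s V)
  | _, _, _, s, Comp.toIn M N => Comp.toIn (substComp s M) (substComp (liftSub s) N)
  | _, _, _, s, Comp.ite V M N =>
      Comp.ite (substVal s V) (substComp s M) (substComp s N)
  | _, _, _, s, Comp.force V => Comp.force (substVal s V)
end

/-- The substitution sending the unique variable to `V`. -/
def sub1 {A : VTy} (V : Val [] A) : CSub [A] [] := fun B x =>
  match B, x with
  | _, CVar.vz => V
  | _, CVar.vs y => nomatch y

/-- Substituting a single closed value for the free variable. -/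
def subst1 {A : VTy} {C : CTy} (V : Val [] A) (M : Comp [A] C) : Comp [] C :=
  substComp (sub1 V) M

/-- Big-step evaluation of closed computations. -/
inductive Eval : {C : CTy} → Comp [] C → Comp [] C → Prop
  | lam {A C} (M : Comp [A] C) : Eval (Comp.lam M) (Comp.lam M)
  | ret {A} (V : Val [] A) : Eval (Comp.ret V) (Comp.ret V)
  | app {A C} {V : Val [] A} {M : Comp [] (CTy.arr A C)} {N R} :
      Eval M (Comp.lam N) → Eval (subst1 V N) R → Eval (Comp.app V M) R
  | toIn {A C} {M : Comp [] (CTy.free A)} {V : Val [] A} {N : Comp [A] C} {R} :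
      Eval M (Comp.ret V) → Eval (subst1 V N) R → Eval (Comp.toIn M N) R
  | iteTrue {C} {M N : Comp [] C} {R} : Eval M R → Eval (Comp.ite Val.tt M N) R
  | iteFalse {C} {M N : Comp [] C} {R} : Eval N R → Eval (Comp.ite Val.ff M N) R
  | force {C} {M : Comp [] C} {R} : Eval M R → Eval (Comp.force (Val.thunk M)) R

/-- Terminal computations: λ-abstractions and `return V`. -/
inductive Terminal : {C : CTy} → Comp [] C → Prop
  | lam {A C} (M : Comp [A] C) : Terminal (Comp.lam M)
  | ret {A} (V : Val [] A) : Terminal (Comp.ret V)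


/-! Auxiliary development. -/

theorem liftRen_comp {Γ Δ Θ : List VTy} {A : VTy} (r1 : Ren Γ Δ) (r2 : Ren Δ Θ) :
    (fun B x => liftRen (A := A) r2 B (liftRen r1 B x))
      = liftRen (A := A) (fun B x => r2 B (r1 B x)) := by
  funext B x; cases x <;> rfl

mutual
theorem renVal_renVal : {Γ Δ Θ : List VTy} → {A : VTy} → (r1 : Ren Γ Δ) → (r2 : Ren Δ Θ) →
    (V : Val Γ A) → renVal r2 (renVal r1 V) = renVal (fun B x => r2 B (r1 B x)) V
  | _, _, _, _, _, _, Val.var _ => rfl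
  | _, _, _, _, _, _, Val.tt => rfl
  | _, _, _, _, _, _, Val.ff => rfl
  | _, _, _, _, r1, r2, Val.thunk M => by
      simp only [renVal]; rw [renComp_renComp r1 r2 M]
theorem renComp_renComp : {Γ Δ Θ : List VTy} → {C : CTy} → (r1 : Ren Γ Δ) → (r2 : Ren Δ Θ) →
    (M : Comp Γ C) → renComp r2 (renComp r1 M) = renComp (fun B x => r2 B (r1 B x)) M
  | _, _, _, _, r1, r2, Comp.lam M => by
      simp only [renComp]; rw [renComp_renComp (liftRen r1) (liftRen r2) M, liftRen_comp]
  | _, _, _, _, r1, r2, Comp.app V M => by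
      simp only [renComp]; rw [renVal_renVal r1 r2 V, renComp_renComp r1 r2 M]
  | _, _, _, _, r1, r2, Comp.ret V => by
      simp only [renComp]; rw [renVal_renVal r1 r2 V]
  | _, _, _, _, r1, r2, Comp.toIn M N => by
      simp only [renComp]
      rw [renComp_renComp r1 r2 M, renComp_renComp (liftRen r1) (liftRen r2) N, liftRen_comp]
  | _, _, _, _, r1, r2, Comp.ite V M N => by
      simp only [renComp]
      rw [renVal_renVal r1 r2 V, renComp_renComp r1 r2 M, renComp_renComp r1 r2 N]
  | _, _, _, _, r1, r2, Comp.force V => by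
      simp only [renComp]; rw [renVal_renVal r1 r2 V]
end

theorem liftSub_liftRen {Γ Δ Θ : List VTy} {A : VTy} (r : Ren Γ Δ) (s : CSub Δ Θ) :
    (fun B x => liftSub (A := A) s B (liftRen r B x))
      = liftSub (A := A) (fun B x => s B (r B x)) := by
  funext B x; cases x <;> rfl

mutual
theorem substVal_renVal : {Γ Δ Θ : List VTy} → {A : VTy} → (r : Ren Γ Δ) → (s : CSub Δ Θ) →
    (V : Val Γ A) → substVal s (renVal r V) = substVal (fun B x => s B (r B x)) V
  | _, _, _, _, _, _, Val.var _ => rfl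
  | _, _, _, _, _, _, Val.tt => rfl
  | _, _, _, _, _, _, Val.ff => rfl
  | _, _, _, _, r, s, Val.thunk M => by
      simp only [renVal, substVal]; rw [substComp_renComp r s M]
theorem substComp_renComp : {Γ Δ Θ : List VTy} → {C : CTy} → (r : Ren Γ Δ) → (s : CSub Δ Θ) →
    (M : Comp Γ C) → substComp s (renComp r M) = substComp (fun B x => s B (r B x)) M
  | _, _, _, _, r, s, Comp.lam M => by
      simp only [renComp, substComp]
      rw [substComp_renComp (liftRen r) (liftSub s) M, liftSub_liftRen]
  | _, _, _, _, r, s, Comp.app V M => by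
      simp only [renComp, substComp]; rw [substVal_renVal r s V, substComp_renComp r s M]
  | _, _, _, _, r, s, Comp.ret V => by
      simp only [renComp, substComp]; rw [substVal_renVal r s V]
  | _, _, _, _, r, s, Comp.toIn M N => by
      simp only [renComp, substComp]
      rw [substComp_renComp r s M, substComp_renComp (liftRen r) (liftSub s) N, liftSub_liftRen]
  | _, _, _, _, r, s, Comp.ite V M N => by
      simp only [renComp, substComp]
      rw [substVal_renVal r s V, substComp_renComp r s M, substComp_renComp r s N]
  | _, _, _, _, r, s, Comp.force V => by
      simp only [renComp, substComp]; rw [substVal_renVal r s V]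
end

theorem liftRen_liftSub {Γ Δ Θ : List VTy} {A : VTy} (s : CSub Γ Δ) (r : Ren Δ Θ) :
    (fun B x => renVal (liftRen (A := A) r) (liftSub s B x))
      = liftSub (A := A) (fun B x => renVal r (s B x)) := by
  funext B x; cases x with
  | vz => rfl
  | vs y =>
    show renVal (liftRen r) (renVal (fun _ => CVar.vs) (s _ y))
        = renVal (fun _ => CVar.vs) (renVal r (s _ y))
    exact (renVal_renVal _ _ _).trans (renVal_renVal r (fun _ => CVar.vs) (s _ y)).symm

mutual
theorem renVal_substVal : {Γ Δ Θ : List VTy} → {A : VTy} → (s : CSub Γ Δ) → (r : Ren Δ Θ) →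
    (V : Val Γ A) → renVal r (substVal s V) = substVal (fun B x => renVal r (s B x)) V
  | _, _, _, _, _, _, Val.var _ => rfl
  | _, _, _, _, _, _, Val.tt => rfl
  | _, _, _, _, _, _, Val.ff => rfl
  | _, _, _, _, s, r, Val.thunk M => by
      simp only [substVal, renVal]; rw [renComp_substComp s r M]
theorem renComp_substComp : {Γ Δ Θ : List VTy} → {C : CTy} → (s : CSub Γ Δ) → (r : Ren Δ Θ) →
    (M : Comp Γ C) → renComp r (substComp s M) = substComp (fun B x => renVal r (s B x)) M
  | _, _, _, _, s, r, Comp.lam M => by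
      simp only [substComp, renComp]
      rw [renComp_substComp (liftSub s) (liftRen r) M, liftRen_liftSub]
  | _, _, _, _, s, r, Comp.app V M => by
      simp only [substComp, renComp]; rw [renVal_substVal s r V, renComp_substComp s r M]
  | _, _, _, _, s, r, Comp.ret V => by
      simp only [substComp, renComp]; rw [renVal_substVal s r V]
  | _, _, _, _, s, r, Comp.toIn M N => by
      simp only [substComp, renComp]
      rw [renComp_substComp s r M, renComp_substComp (liftSub s) (liftRen r) N, liftRen_liftSub]
  | _, _, _, _, s, r, Comp.ite V M N => by
      simp only [substComp, renComp]
      rw [renVal_substVal s r V, renComp_substComp s r M, renComp_substComp s r N]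
  | _, _, _, _, s, r, Comp.force V => by
      simp only [substComp, renComp]; rw [renVal_substVal s r V]
end

theorem liftSub_comp {Γ Δ Θ : List VTy} {A : VTy} (s1 : CSub Γ Δ) (s2 : CSub Δ Θ) :
    (fun B x => substVal (liftSub (A := A) s2) (liftSub s1 B x))
      = liftSub (A := A) (fun B x => substVal s2 (s1 B x)) := by
  funext B x; cases x with
  | vz => rfl
  | vs y =>
    show substVal (liftSub s2) (renVal (fun _ => CVar.vs) (s1 _ y))
        = renVal (fun _ => CVar.vs) (substVal s2 (s1 _ y))
    exact (substVal_renVal _ _ _).trans (renVal_substVal _ _ _).symm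

mutual
theorem substVal_substVal : {Γ Δ Θ : List VTy} → {A : VTy} → (s1 : CSub Γ Δ) → (s2 : CSub Δ Θ) →
    (V : Val Γ A) → substVal s2 (substVal s1 V) = substVal (fun B x => substVal s2 (s1 B x)) V
  | _, _, _, _, _, _, Val.var _ => rfl
  | _, _, _, _, _, _, Val.tt => rfl
  | _, _, _, _, _, _, Val.ff => rfl
  | _, _, _, _, s1, s2, Val.thunk M => by
      simp only [substVal]; rw [substComp_substComp s1 s2 M]
theorem substComp_substComp : {Γ Δ Θ : List VTy} → {C : CTy} → (s1 : CSub Γ Δ) → (s2 : CSub Δ Θ) →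
    (M : Comp Γ C) → substComp s2 (substComp s1 M) = substComp (fun B x => substVal s2 (s1 B x)) M
  | _, _, _, _, s1, s2, Comp.lam M => by
      simp only [substComp]
      rw [substComp_substComp (liftSub s1) (liftSub s2) M, liftSub_comp]
  | _, _, _, _, s1, s2, Comp.app V M => by
      simp only [substComp]; rw [substVal_substVal s1 s2 V, substComp_substComp s1 s2 M]
  | _, _, _, _, s1, s2, Comp.ret V => by
      simp only [substComp]; rw [substVal_substVal s1 s2 V]
  | _, _, _, _, s1, s2, Comp.toIn M N => by
      simp only [substComp]
      rw [substComp_substComp s1 s2 M, substComp_substComp (liftSub s1) (liftSub s2) N, liftSub_comp]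
  | _, _, _, _, s1, s2, Comp.ite V M N => by
      simp only [substComp]
      rw [substVal_substVal s1 s2 V, substComp_substComp s1 s2 M, substComp_substComp s1 s2 N]
  | _, _, _, _, s1, s2, Comp.force V => by
      simp only [substComp]; rw [substVal_substVal s1 s2 V]
end

theorem liftSub_congr {Γ Δ : List VTy} {A : VTy} (s1 s2 : CSub Γ Δ)
    (h : ∀ B x, s1 B x = s2 B x) : ∀ B x, liftSub (A := A) s1 B x = liftSub (A := A) s2 B x := by
  intro B x; cases x with
  | vz => rfl
  | vs y => show renVal _ (s1 _ y) = renVal _ (s2 _ y); rw [h]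

mutual
theorem substVal_congr : {Γ Δ : List VTy} → {A : VTy} → (s1 s2 : CSub Γ Δ) →
    (h : ∀ B x, s1 B x = s2 B x) → (V : Val Γ A) → substVal s1 V = substVal s2 V
  | _, _, _, _, _, h, Val.var x => h _ x
  | _, _, _, _, _, _, Val.tt => rfl
  | _, _, _, _, _, _, Val.ff => rfl
  | _, _, _, s1, s2, h, Val.thunk M => by
      simp only [substVal]; rw [substComp_congr s1 s2 h M]
theorem substComp_congr : {Γ Δ : List VTy} → {C : CTy} → (s1 s2 : CSub Γ Δ) →
    (h : ∀ B x, s1 B x = s2 B x) → (M : Comp Γ C) → substComp s1 M = substComp s2 M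
  | _, _, _, s1, s2, h, Comp.lam M => by
      simp only [substComp]
      rw [substComp_congr (liftSub s1) (liftSub s2) (liftSub_congr s1 s2 h) M]
  | _, _, _, s1, s2, h, Comp.app V M => by
      simp only [substComp]; rw [substVal_congr s1 s2 h V, substComp_congr s1 s2 h M]
  | _, _, _, s1, s2, h, Comp.ret V => by
      simp only [substComp]; rw [substVal_congr s1 s2 h V]
  | _, _, _, s1, s2, h, Comp.toIn M N => by
      simp only [substComp]
      rw [substComp_congr s1 s2 h M, substComp_congr (liftSub s1) (liftSub s2) (liftSub_congr s1 s2 h) N]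
  | _, _, _, s1, s2, h, Comp.ite V M N => by
      simp only [substComp]
      rw [substVal_congr s1 s2 h V, substComp_congr s1 s2 h M, substComp_congr s1 s2 h N]
  | _, _, _, s1, s2, h, Comp.force V => by
      simp only [substComp]; rw [substVal_congr s1 s2 h V]
end

theorem liftSub_id {Γ : List VTy} {A : VTy} (s : CSub Γ Γ) (h : ∀ B x, s B x = Val.var x) :
    ∀ B x, liftSub (A := A) s B x = Val.var x := by
  intro B x; cases x with
  | vz => rfl
  | vs y => show renVal (fun _ => CVar.vs) (s _ y) = _; rw [h]; rfl

mutual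
theorem substVal_id : {Γ : List VTy} → {A : VTy} → (s : CSub Γ Γ) →
    (h : ∀ B x, s B x = Val.var x) → (V : Val Γ A) → substVal s V = V
  | _, _, _, h, Val.var x => h _ x
  | _, _, _, _, Val.tt => rfl
  | _, _, _, _, Val.ff => rfl
  | _, _, s, h, Val.thunk M => by
      simp only [substVal]; rw [substComp_id s h M]
theorem substComp_id : {Γ : List VTy} → {C : CTy} → (s : CSub Γ Γ) →
    (h : ∀ B x, s B x = Val.var x) → (M : Comp Γ C) → substComp s M = M
  | _, _, s, h, Comp.lam M => by
      simp only [substComp]; rw [substComp_id (liftSub s) (liftSub_id s h) M]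
  | _, _, s, h, Comp.app V M => by
      simp only [substComp]; rw [substVal_id s h V, substComp_id s h M]
  | _, _, s, h, Comp.ret V => by
      simp only [substComp]; rw [substVal_id s h V]
  | _, _, s, h, Comp.toIn M N => by
      simp only [substComp]; rw [substComp_id s h M, substComp_id (liftSub s) (liftSub_id s h) N]
  | _, _, s, h, Comp.ite V M N => by
      simp only [substComp]; rw [substVal_id s h V, substComp_id s h M, substComp_id s h N]
  | _, _, s, h, Comp.force V => by
      simp only [substComp]; rw [substVal_id s h V]
end

/-- Cons a closed value onto a closing substitution. -/
def scons {Γ : List VTy} {A : VTy} (V : Val [] A) (s : CSub Γ []) : CSub (A :: Γ) [] :=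
  fun B x =>
    match B, x with
    | _, CVar.vz => V
    | _, CVar.vs y => s _ y

theorem subst1_lift {Γ : List VTy} {A : VTy} {C : CTy} (V : Val [] A) (s : CSub Γ [])
    (M : Comp (A :: Γ) C) :
    subst1 V (substComp (liftSub s) M) = substComp (scons V s) M := by
  unfold subst1
  rw [substComp_substComp]
  apply substComp_congr
  intro B x
  cases x with
  | vz => rfl
  | vs y =>
    show substVal (sub1 V) (renVal (fun _ => CVar.vs) (s _ y)) = s _ y
    exact (substVal_renVal _ _ _).trans (substVal_id _ (fun B x => by cases x) _)

mutual
/-- Reducibility for values. -/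
def GoodV : {A : VTy} → Val [] A → Prop
  | VTy.bool, _ => True
  | VTy.thunk _, V => ∃ M, V = Val.thunk M ∧ GoodC M
/-- Reducibility for computations. -/
def GoodC : {C : CTy} → Comp [] C → Prop
  | CTy.arr _ _, M => ∃ N, Eval M (Comp.lam N) ∧ ∀ V, GoodV V → GoodC (subst1 V N)
  | CTy.free _, M => ∃ V, Eval M (Comp.ret V) ∧ GoodV V
end

theorem goodC_closure {C : CTy} {M M' : Comp [] C}
    (h : ∀ R, Eval M' R → Eval M R) (hg : GoodC M') : GoodC M := by
  cases C with
  | arr A C =>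
    obtain ⟨N, hN, hb⟩ := hg
    exact ⟨N, h _ hN, hb⟩
  | free A =>
    obtain ⟨V, hV, hg⟩ := hg
    exact ⟨V, h _ hV, hg⟩

/-- A substitution consisting of reducible values. -/
def GoodSub {Γ : List VTy} (s : CSub Γ []) : Prop := ∀ A x, GoodV (s A x)

theorem goodSub_scons {Γ : List VTy} {A : VTy} {V : Val [] A} {s : CSub Γ []}
    (hV : GoodV V) (hs : GoodSub s) : GoodSub (scons V s) := by
  intro B x; cases x with
  | vz => exact hV
  | vs y => exact hs _ y

mutual
theorem fundV : {Γ : List VTy} → {A : VTy} → (V : Val Γ A) → (s : CSub Γ []) →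
    (hs : GoodSub s) → GoodV (substVal s V)
  | _, _, Val.var x, s, hs => hs _ x
  | _, _, Val.tt, _, _ => trivial
  | _, _, Val.ff, _, _ => trivial
  | _, _, Val.thunk M, s, hs => ⟨substComp s M, rfl, fundC M s hs⟩
theorem fundC : {Γ : List VTy} → {C : CTy} → (M : Comp Γ C) → (s : CSub Γ []) →
    (hs : GoodSub s) → GoodC (substComp s M)
  | _, _, Comp.lam M, s, hs => by
      refine ⟨substComp (liftSub s) M, Eval.lam _, ?_⟩
      intro V hV
      rw [subst1_lift]
      exact fundC M (scons V s) (goodSub_scons hV hs)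
  | _, _, Comp.app V M, s, hs => by
      obtain ⟨N, hN, hb⟩ := fundC M s hs
      have hV := fundV V s hs
      exact goodC_closure (fun R hR => Eval.app hN hR) (hb _ hV)
  | _, _, Comp.ret V, s, hs => ⟨substVal s V, Eval.ret _, fundV V s hs⟩
  | _, _, Comp.toIn M N, s, hs => by
      obtain ⟨V, hV, hg⟩ := fundC M s hs
      have : GoodC (subst1 V (substComp (liftSub s) N)) := by
        rw [subst1_lift]
        exact fundC N (scons V s) (goodSub_scons hg hs)
      exact goodC_closure (fun R hR => Eval.toIn hV hR) this
  | _, _, Comp.ite V M N, s, hs => by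
      rcases hb : substVal s V with x | _ | _
      · exact nomatch x
      · exact goodC_closure (fun R hR => by
          show Eval (Comp.ite (substVal s V) (substComp s M) (substComp s N)) R
          rw [hb]; exact Eval.iteTrue hR) (fundC M s hs)
      · exact goodC_closure (fun R hR => by
          show Eval (Comp.ite (substVal s V) (substComp s M) (substComp s N)) R
          rw [hb]; exact Eval.iteFalse hR) (fundC N s hs)
  | _, _, Comp.force V, s, hs => by
      have hV := fundV V s hs
      obtain ⟨M', hM', hg⟩ := hV
      exact goodC_closure (fun R hR => by
        show Eval (Comp.force (substVal s V)) R
        rw [hM']; exact Eval.force hR) hg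
end

/-- Determinism of big-step evaluation. -/
theorem cbpv_eval_det {C : CTy} {M R1 R2 : Comp [] C} (h1 : Eval M R1) (h2 : Eval M R2) :
    R1 = R2 := by
  induction h1 with
  | lam _ => cases h2; rfl
  | ret _ => cases h2; rfl
  | app hM hN ihM ihN =>
    cases h2 with
    | app hM' hN' =>
      cases ihM hM'
      exact ihN hN'
  | toIn hM hN ihM ihN =>
    cases h2 with
    | toIn hM' hN' =>
      cases ihM hM'
      exact ihN hN'
  | iteTrue hM ih => cases h2 with | iteTrue h' => exact ih h'
  | iteFalse hM ih => cases h2 with | iteFalse h' => exact ih h'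
  | force hM ih => cases h2 with | force h' => exact ih h'

theorem eval_terminal {C : CTy} {M R : Comp [] C} (h : Eval M R) : Terminal R := by
  induction h with
  | lam M => exact Terminal.lam M
  | ret V => exact Terminal.ret V
  | app _ _ _ ih => exact ih
  | toIn _ _ _ ih => exact ih
  | iteTrue _ ih => exact ih
  | iteFalse _ ih => exact ih
  | force _ ih => exact ih

/-- In the effect-free fragment of CBPV, big-step evaluation is deterministic
and total on closed well-typed computations: every closed computation
evaluates to exactly one terminal computation. -/
theorem stmt_18 {C : CTy} (M : Comp [] C) :
    ∃! R : Comp [] C, Terminal R ∧ Eval M R := by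
  have hg : GoodC M := by
    have := fundC M (fun B x => by cases x) (fun B x => by cases x)
    convert this using 1
    exact (substComp_id _ (fun B (x : CVar [] B) => by cases x) M).symm
  have : ∃ R : Comp [] C, Eval M R := by
    cases C with
    | arr A C => obtain ⟨N, hN, _⟩ := hg; exact ⟨_, hN⟩
    | free A => obtain ⟨V, hV, _⟩ := hg; exact ⟨_, hV⟩
  obtain ⟨R, hR⟩ := this
  exact ⟨R, ⟨eval_terminal hR, hR⟩, fun R' ⟨_, hR'⟩ => cbpv_eval_det hR' hR⟩
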